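/- Let 0 < a < 1 and 0 < v < π. Set b = √(1−a²)·e₁, c = √(1−a²)·(cos v, sin v, 0), and b' = −a·e₃, and let φ = ∠(b − b', c − b') be the angle between b − b' and c − b'. Then the angle between e₂ = (0,1,0) and the vector (c − b') − cos(φ)·(b − b') equals arccos(√(1−a²)·sin(v)/sin(φ)). -/

import Mathlib

open Real MeasureTheory Metric

noncomputable def pt (a b c : ℝ) : EuclideanSpace ℝ (Fin 3) :=
  (EuclideanSpace.equiv (Fin 3) ℝ).symm ![a, b, c]

lemma pt_sub (a b c d e f : ℝ) : pt a b c - pt d e f = pt (a-d) (b-e) (c-f) := by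
  ext i; fin_cases i <;> simp [pt]

lemma pt_smul (r a b c : ℝ) : r • pt a b c = pt (r*a) (r*b) (r*c) := by
  ext i; fin_cases i <;> simp [pt]

lemma inner_pt (a b c d e f : ℝ) :
    (inner ℝ (pt a b c) (pt d e f) : ℝ) = a*d + b*e + c*f := by
  simp [pt, PiLp.inner_apply, Fin.sum_univ_three]; ring

lemma norm_pt (a b c : ℝ) : ‖pt a b c‖ = Real.sqrt (a^2 + b^2 + c^2) := by
  rw [norm_eq_sqrt_real_inner, inner_pt]; ring_nf

theorem stmt_7 (a v : ℝ) (ha0 : 0 < a) (ha1 : a < 1) (hv0 : 0 < v) (hv : v < π)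
    (b c b' : EuclideanSpace ℝ (Fin 3))
    (hb : b = pt (Real.sqrt (1 - a ^ 2)) 0 0)
    (hc : c = pt (Real.sqrt (1 - a ^ 2) * Real.cos v) (Real.sqrt (1 - a ^ 2) * Real.sin v) 0)
    (hb' : b' = pt 0 0 (-a))
    (φ : ℝ) (hφ : φ = InnerProductGeometry.angle (b - b') (c - b')) :
    InnerProductGeometry.angle (pt 0 1 0) ((c - b') - Real.cos φ • (b - b')) =
      Real.arccos (Real.sqrt (1 - a ^ 2) * Real.sin v / Real.sin φ) := by
  subst hb hc hb'
  set s := Real.sqrt (1 - a ^ 2) with hs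
  have hs2 : s ^ 2 = 1 - a ^ 2 := Real.sq_sqrt (by nlinarith)
  have hs0 : 0 < s := Real.sqrt_pos.2 (by nlinarith)
  have hbb : pt s 0 0 - pt 0 0 (-a) = pt s 0 a := by rw [pt_sub]; norm_num
  have hcc : pt (s * Real.cos v) (s * Real.sin v) 0 - pt 0 0 (-a)
      = pt (s * Real.cos v) (s * Real.sin v) a := by rw [pt_sub]; norm_num
  rw [hbb, hcc] at hφ
  have hnb : ‖pt s 0 a‖ = 1 := by
    rw [norm_pt]
    rw [show s ^ 2 + 0 ^ 2 + a ^ 2 = 1 by nlinarith, Real.sqrt_one]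
  have hnc : ‖pt (s * Real.cos v) (s * Real.sin v) a‖ = 1 := by
    rw [norm_pt]
    rw [show (s * Real.cos v) ^ 2 + (s * Real.sin v) ^ 2 + a ^ 2 = 1 by
      nlinarith [Real.sin_sq_add_cos_sq v], Real.sqrt_one]
  rw [InnerProductGeometry.angle, inner_pt, hnb, hnc] at hφ
  have hcos : Real.cos φ = s ^ 2 * Real.cos v + a ^ 2 := by
    rw [hφ, Real.cos_arccos] <;>
      nlinarith [Real.neg_one_le_cos v, Real.cos_le_one v, Real.sin_sq_add_cos_sq v]
  have hφ0 : 0 ≤ φ := hφ ▸ Real.arccos_nonneg _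
  have hφπ : φ ≤ π := hφ ▸ Real.arccos_le_pi _
  have hsinφ : 0 ≤ Real.sin φ := Real.sin_nonneg_of_nonneg_of_le_pi hφ0 hφπ
  rw [hbb, hcc, pt_smul, pt_sub, InnerProductGeometry.angle, inner_pt, norm_pt, norm_pt]
  have hkey : (s * Real.cos v - Real.cos φ * s) ^ 2 + (s * Real.sin v - Real.cos φ * 0) ^ 2
      + (a - Real.cos φ * a) ^ 2 = Real.sin φ ^ 2 := by
    rw [Real.sin_sq, hcos]
    linear_combination (s ^ 2) * (Real.sin_sq_add_cos_sq v)
      + (1 + (s ^ 2 * Real.cos v + a ^ 2) ^ 2) * hs2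
  rw [hkey, Real.sqrt_sq hsinφ]
  rw [show (0:ℝ) ^ 2 + 1 ^ 2 + 0 ^ 2 = 1 by norm_num, Real.sqrt_one]
  ring_nf
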